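/- Let G = (V,E) be a finite simple graph. The number of connected components of ℝ^V minus the union of the hyperplanes {z : z_u = z_w} over all edges {u,w} ∈ E equals (−1)^{|V|} χ_G(−1). -/

import Mathlib

open SimpleGraph Polynomial

/-- Number of proper colorings of `G` with `k` colors. -/
noncomputable def properColoringCount {V : Type*} (G : SimpleGraph V) (k : ℕ) : ℕ :=
  Nat.card {f : V → Fin k // ∀ u v, G.Adj u v → f u ≠ f v}

/-- `P` is the chromatic polynomial of `G`. -/
def IsChromaticPoly {V : Type*} (G : SimpleGraph V) (P : Polynomial ℤ) : Prop :=
  ∀ k : ℕ, P.eval (k : ℤ) = properColoringCount G k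

/-- The complement in `ℝ^V` of the graphical arrangement of `G` (hyperplanes
`z_u = z_w` over edges `{u,w}`). -/
def graphicalComplement {V : Type*} (G : SimpleGraph V) : Set (V → ℝ) :=
  {z | ∀ u w, G.Adj u w → z u ≠ z w}

namespace Zas

open Relation

variable {α : Type*}

lemma rtg_ne {r : α → α → Prop} {a b : α} (h : ReflTransGen r a b) (hne : a ≠ b) :
    TransGen r a b := by
  rcases (reflTransGen_iff_eq_or_transGen.mp h) with heq | h
  · exact absurd heq.symm hne
  · exact h

lemma transGen_insert {r : α → α → Prop} {u w x y : α}
    (h : TransGen (fun a b => r a b ∨ (a = u ∧ b = w)) x y) :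
    TransGen r x y ∨ (ReflTransGen r x u ∧ ReflTransGen r w y) := by
  induction h with
  | single h1 =>
    rcases h1 with h1 | ⟨rfl, rfl⟩
    · exact Or.inl (TransGen.single h1)
    · exact Or.inr ⟨ReflTransGen.refl, ReflTransGen.refl⟩
  | tail hxb hby ih =>
    rcases hby with hby | ⟨rfl, rfl⟩
    · rcases ih with h2 | ⟨h2, h3⟩
      · exact Or.inl (h2.tail hby)
      · exact Or.inr ⟨h2, h3.tail hby⟩
    · rcases ih with h2 | ⟨h2, h3⟩
      · exact Or.inr ⟨h2.to_reflTransGen, ReflTransGen.refl⟩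
      · exact Or.inr ⟨h2, ReflTransGen.refl⟩

variable {V : Type*}

/-- acyclic orientation -/
def IsAO (G : SimpleGraph V) (r : V → V → Prop) : Prop :=
  (∀ a b, r a b → G.Adj a b) ∧ (∀ a b, G.Adj a b → (r a b ↔ ¬ r b a)) ∧
    ∀ v, ¬ TransGen r v v

def fwdO (σ : V → V → Prop) (u w : V) : V → V → Prop :=
  fun a b => σ a b ∨ (a = u ∧ b = w)

def restrictO (H : SimpleGraph V) (r : V → V → Prop) : V → V → Prop :=
  fun a b => r a b ∧ H.Adj a b

def Gdel (G : SimpleGraph V) (u w : V) : SimpleGraph V where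
  Adj a b := G.Adj a b ∧ ¬(a = u ∧ b = w) ∧ ¬(a = w ∧ b = u)
  symm := ⟨by
    intro a b h
    exact ⟨h.1.symm, fun hc => h.2.2 ⟨hc.2, hc.1⟩, fun hc => h.2.1 ⟨hc.2, hc.1⟩⟩⟩
  loopless := ⟨fun a h => G.irrefl h.1⟩

def Gcon (G : SimpleGraph V) (u w : V) : SimpleGraph {v : V // v ≠ w} where
  Adj a b := a ≠ b ∧ (G.Adj ↑a ↑b ∨ (↑a = u ∧ G.Adj w ↑b) ∨ (↑b = u ∧ G.Adj ↑a w))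
  symm := ⟨by
    rintro a b ⟨hne, h⟩
    refine ⟨hne.symm, ?_⟩
    rcases h with h | ⟨h1, h2⟩ | ⟨h1, h2⟩
    · exact Or.inl h.symm
    · exact Or.inr (Or.inr ⟨h1, h2.symm⟩)
    · exact Or.inr (Or.inl ⟨h1, h2.symm⟩)⟩
  loopless := ⟨fun a h => h.1 rfl⟩

variable [DecidableEq V]

def proj (u w : V) (hne : u ≠ w) : V → {v : V // v ≠ w} :=
  fun v => if h : v = w then ⟨u, hne⟩ else ⟨v, h⟩

lemma proj_coe {u w : V} (hne : u ≠ w) (a : {v : V // v ≠ w}) :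
    proj u w hne ↑a = a := by
  simp [proj, a.2]

lemma proj_w {u w : V} (hne : u ≠ w) : proj u w hne w = ⟨u, hne⟩ := by simp [proj]

lemma proj_of_ne {u w : V} (hne : u ≠ w) {v : V} (h : v ≠ w) :
    proj u w hne v = ⟨v, h⟩ := by simp [proj, h]

lemma gdel_adj {G : SimpleGraph V} {u w a b : V} :
    (Gdel G u w).Adj a b ↔ G.Adj a b ∧ ¬(a = u ∧ b = w) ∧ ¬(a = w ∧ b = u) := Iff.rfl

lemma gcon_adj {G : SimpleGraph V} {u w : V} {a b : {v : V // v ≠ w}} :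
    (Gcon G u w).Adj a b ↔
      a ≠ b ∧ (G.Adj ↑a ↑b ∨ (↑a = u ∧ G.Adj w ↑b) ∨ (↑b = u ∧ G.Adj ↑a w)) := Iff.rfl

lemma adj_proj {G : SimpleGraph V} {u w : V} (hadj : G.Adj u w) {a b : V}
    (h : (Gdel G u w).Adj a b) :
    (Gcon G u w).Adj (proj u w hadj.ne a) (proj u w hadj.ne b) := by
  have hne := hadj.ne
  rcases h with ⟨h, h1, h2⟩
  by_cases ha : a = w
  · have hb : b ≠ w := fun hb => G.irrefl (v := w) (by rwa [ha, hb] at h)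
    have hbu : b ≠ u := fun hb => h2 ⟨ha, hb⟩
    rw [ha, proj_w hne, proj_of_ne hne hb]
    refine ⟨?_, Or.inr (Or.inl ⟨rfl, by rwa [ha] at h⟩)⟩
    simp only [ne_eq, Subtype.mk.injEq]
    exact fun e => hbu e.symm
  · by_cases hb : b = w
    · have hau : a ≠ u := fun ha' => h1 ⟨ha', hb⟩
      rw [hb, proj_w hne, proj_of_ne hne ha]
      refine ⟨?_, Or.inr (Or.inr ⟨rfl, by rwa [hb] at h⟩)⟩
      simp only [ne_eq, Subtype.mk.injEq]
      exact hau
    · rw [proj_of_ne hne ha, proj_of_ne hne hb]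
      refine ⟨?_, Or.inl h⟩
      simp only [ne_eq, Subtype.mk.injEq]
      exact h.ne


lemma count_del [Finite V] (G : SimpleGraph V) {u w : V} (hadj : G.Adj u w) (k : ℕ) :
    properColoringCount (Gdel G u w) k =
      properColoringCount G k + properColoringCount (Gcon G u w) k := by
  have hne := hadj.ne
  rw [properColoringCount, properColoringCount, properColoringCount, ← Nat.card_sum]
  refine (Nat.card_eq_of_bijective ?_ ?_).symm
  · rintro (f | g)
    · refine ⟨f.1, fun a b hab => f.2 a b hab.1⟩
    · refine ⟨fun v => g.1 (proj u w hne v), fun a b hab => ?_⟩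
      exact g.2 _ _ (adj_proj hadj hab)
  · constructor
    · rintro (f | g) (f' | g') hh
      · simp only [Subtype.mk.injEq] at hh
        exact congrArg Sum.inl (Subtype.ext hh)
      · exfalso
        simp only [Subtype.mk.injEq] at hh
        have h1 : f.1 u ≠ f.1 w := f.2 u w hadj
        have h2 : g'.1 (proj u w hne u) = g'.1 (proj u w hne w) := by
          rw [proj_w hne, proj_of_ne hne hne]
        rw [hh] at h1
        exact h1 h2
      · exfalso
        simp only [Subtype.mk.injEq] at hh
        have h1 : f'.1 u ≠ f'.1 w := f'.2 u w hadj
        have h2 : g.1 (proj u w hne u) = g.1 (proj u w hne w) := by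
          rw [proj_w hne, proj_of_ne hne hne]
        rw [← hh] at h1
        exact h1 h2
      · simp only [Subtype.mk.injEq] at hh
        refine congrArg Sum.inr (Subtype.ext (funext fun v => ?_))
        have := congrFun hh ↑v
        rwa [proj_coe] at this
    · rintro ⟨f, hf⟩
      by_cases h : f u = f w
      · refine ⟨Sum.inr ⟨fun v => f ↑v, ?_⟩, ?_⟩
        · rintro a b ⟨hab, hd⟩
          rcases hd with hd | ⟨ha, hd⟩ | ⟨hb, hd⟩
          · refine hf _ _ ⟨hd, fun hc => b.2 hc.2, fun hc => a.2 hc.1⟩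
          · have hbu : (↑b : V) ≠ u := fun hc => hab (Subtype.ext (ha.trans hc.symm))
            have h2 : f w ≠ f ↑b := hf _ _ ⟨hd, fun hc => hne hc.1.symm, fun hc => hbu hc.2⟩
            show f ↑a ≠ f ↑b
            rw [ha, h]
            exact h2
          · have hau : (↑a : V) ≠ u := fun hc => hab (Subtype.ext (hc.trans hb.symm))
            have h2 : f ↑a ≠ f w := hf _ _ ⟨hd, fun hc => hau hc.1, fun hc => hne hc.2.symm⟩
            show f ↑a ≠ f ↑b
            rw [hb, h]
            exact fun hc => h2 hc
        · refine Subtype.ext (funext fun v => ?_)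
          show f ↑(proj u w hne v) = f v
          by_cases hv : v = w
          · rw [hv, proj_w hne]
            exact h
          · rw [proj_of_ne hne hv]
      · refine ⟨Sum.inl ⟨f, ?_⟩, rfl⟩
        intro a b hab
        by_cases h1 : a = u ∧ b = w
        · rw [h1.1, h1.2]; exact h
        · by_cases h2 : a = w ∧ b = u
          · rw [h2.1, h2.2]; exact fun hc => h hc.symm
          · exact hf a b ⟨hab, h1, h2⟩

section Orient

variable {G : SimpleGraph V} {u w : V}

lemma IsAO.or {r : V → V → Prop} (h : IsAO G r) {a b : V} (hab : G.Adj a b) :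
    r a b ∨ r b a := by
  by_cases hr : r a b
  · exact Or.inl hr
  · refine Or.inr (by_contra fun hr' => hr ((h.2.1 a b hab).mpr hr'))

lemma restrict_isAO {H : SimpleGraph V} (hHG : ∀ a b, H.Adj a b → G.Adj a b)
    {r : V → V → Prop} (h : IsAO G r) : IsAO H (restrictO H r) := by
  refine ⟨fun a b hr => hr.2, fun a b hab => ?_,
    fun v hv => h.2.2 v (TransGen.mono (fun a b hr => hr.1) _ _ hv)⟩
  have hG := hHG a b hab
  constructor
  · rintro ⟨hr, _⟩ ⟨hr', _⟩
    exact (h.2.1 a b hG).mp hr hr'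
  · intro hn
    exact ⟨(h.2.1 a b hG).mpr fun hr' => hn ⟨hr', hab.symm⟩, hab⟩

lemma fwd_isAO (hadj : G.Adj u w) {H : SimpleGraph V}
    (hH : ∀ a b, H.Adj a b ↔ (G.Adj a b ∧ ¬(a = u ∧ b = w) ∧ ¬(a = w ∧ b = u)))
    {σ : V → V → Prop} (hσ : IsAO H σ) (hp : ¬ TransGen σ w u) : IsAO G (fwdO σ u w) := by
  have hne := hadj.ne
  have hwu : ¬ fwdO σ u w w u := by
    rintro (hs | ⟨h2, h3⟩)
    · exact hp (TransGen.single hs)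
    · exact hne h2.symm
  refine ⟨?_, ?_, ?_⟩
  · rintro a b (hs | ⟨rfl, rfl⟩)
    · exact ((hH a b).mp (hσ.1 a b hs)).1
    · exact hadj
  · intro a b hab
    by_cases h1 : a = u ∧ b = w
    · rcases h1 with ⟨rfl, rfl⟩
      exact iff_of_true (Or.inr ⟨rfl, rfl⟩) hwu
    · by_cases h2 : a = w ∧ b = u
      · rcases h2 with ⟨rfl, rfl⟩
        exact iff_of_false hwu (not_not_intro (Or.inr ⟨rfl, rfl⟩))
      · have hHab : H.Adj a b := (hH a b).mpr ⟨hab, h1, h2⟩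
        have e1 : fwdO σ u w a b ↔ σ a b := or_iff_left h1
        have e2 : fwdO σ u w b a ↔ σ b a :=
          or_iff_left (fun hc => h2 ⟨hc.2, hc.1⟩)
        rw [e1, e2]
        exact hσ.2.1 a b hHab
  · intro v hv
    rcases transGen_insert hv with hc | ⟨h1, h2⟩
    · exact hσ.2.2 v hc
    · exact hp (rtg_ne (h2.trans h1) (Ne.symm hne))

lemma restrict_fwd {H : SimpleGraph V} (hnadj : ¬ H.Adj u w)
    {σ : V → V → Prop} (hσ1 : ∀ a b, σ a b → H.Adj a b) :
    restrictO H (fwdO σ u w) = σ := by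
  funext a b
  apply propext
  constructor
  · rintro ⟨hs | ⟨rfl, rfl⟩, hHab⟩
    · exact hs
    · exact absurd hHab hnadj
  · exact fun hs => ⟨Or.inl hs, hσ1 a b hs⟩

lemma eq_fwd_of {r : V → V → Prop} (hr : IsAO G r) (hadj : G.Adj u w) (huw : r u w)
    {H : SimpleGraph V}
    (hH : ∀ a b, H.Adj a b ↔ (G.Adj a b ∧ ¬(a = u ∧ b = w) ∧ ¬(a = w ∧ b = u))) :
    r = fwdO (restrictO H r) u w := by
  funext a b
  apply propext
  constructor
  · intro hab
    have hG := hr.1 a b hab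
    by_cases h1 : a = u ∧ b = w
    · exact Or.inr h1
    · by_cases h2 : a = w ∧ b = u
      · exfalso
        rw [h2.1, h2.2] at hab
        exact (hr.2.1 u w hadj).mp huw hab
      · exact Or.inl ⟨hab, (hH a b).mpr ⟨hG, h1, h2⟩⟩
  · rintro (⟨hab, _⟩ | ⟨rfl, rfl⟩)
    · exact hab
    · exact huw

lemma no_path_of_fwd_acyclic {σ : V → V → Prop} (h : IsAO G (fwdO σ u w)) :
    ¬ TransGen σ w u := fun hp =>
  h.2.2 u (TransGen.head (Or.inr ⟨rfl, rfl⟩) (TransGen.mono (fun a b hs => Or.inl hs) _ _ hp))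

def NoPath (σ : V → V → Prop) (u w : V) : Prop :=
  ¬ TransGen σ u w ∧ ¬ TransGen σ w u

def liftO (G : SimpleGraph V) (u w : V) (hne : u ≠ w)
    (τ : {v : V // v ≠ w} → {v : V // v ≠ w} → Prop) : V → V → Prop :=
  fun a b => (Gdel G u w).Adj a b ∧ τ (proj u w hne a) (proj u w hne b)

def contractO (σ : V → V → Prop) (u w : V) :
    {v : V // v ≠ w} → {v : V // v ≠ w} → Prop :=
  fun a b => σ ↑a ↑b ∨ (↑a = u ∧ σ w ↑b) ∨ (↑b = u ∧ σ ↑a w)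

lemma lift_isAO (hadj : G.Adj u w) {τ} (hτ : IsAO (Gcon G u w) τ) :
    IsAO (Gdel G u w) (liftO G u w hadj.ne τ) ∧ NoPath (liftO G u w hadj.ne τ) u w := by
  have hne := hadj.ne
  have hlift : ∀ x y, liftO G u w hne τ x y →
      τ (proj u w hne x) (proj u w hne y) := fun x y h => h.2
  refine ⟨⟨fun a b h => h.1, fun a b hab => ?_, fun v hv => ?_⟩, ?_, ?_⟩
  · have hcon := hτ.2.1 _ _ (adj_proj hadj hab)
    constructor
    · rintro ⟨_, ht⟩ ⟨_, ht'⟩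
      exact hcon.mp ht ht'
    · intro hn
      exact ⟨hab, hcon.mpr fun ht' => hn ⟨hab.symm, ht'⟩⟩
  · exact hτ.2.2 _ (TransGen.lift (proj u w hne) hlift _ _ hv)
  · intro hp
    have : TransGen τ (proj u w hne u) (proj u w hne w) := TransGen.lift (proj u w hne) hlift _ _ hp
    rw [proj_of_ne hne hne, proj_w hne] at this
    exact hτ.2.2 _ this
  · intro hp
    have : TransGen τ (proj u w hne w) (proj u w hne u) := TransGen.lift (proj u w hne) hlift _ _ hp
    rw [proj_of_ne hne hne, proj_w hne] at this
    exact hτ.2.2 _ this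

lemma contract_lift (hadj : G.Adj u w) {τ} (hτ : IsAO (Gcon G u w) τ) :
    contractO (liftO G u w hadj.ne τ) u w = τ := by
  have hne := hadj.ne
  funext a b
  apply propext
  constructor
  · rintro (⟨_, ht⟩ | ⟨ha, _, ht⟩ | ⟨hb, _, ht⟩)
    · rwa [proj_coe, proj_coe] at ht
    · rw [proj_w hne, proj_coe] at ht
      have : (⟨u, hne⟩ : {v : V // v ≠ w}) = a := Subtype.ext ha.symm
      rwa [this] at ht
    · rw [proj_w hne, proj_coe] at ht
      have : (⟨u, hne⟩ : {v : V // v ≠ w}) = b := Subtype.ext hb.symm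
      rwa [this] at ht
  · intro ht
    obtain ⟨hab, hd⟩ := hτ.1 a b ht
    rcases hd with h | ⟨ha, h⟩ | ⟨hb, h⟩
    · refine Or.inl ⟨⟨h, fun hc => b.2 hc.2, fun hc => a.2 hc.1⟩, ?_⟩
      rwa [proj_coe, proj_coe]
    · have hbu : (↑b : V) ≠ u := fun hc => hab (Subtype.ext (ha.trans hc.symm))
      refine Or.inr (Or.inl ⟨ha, ⟨h, fun hc => hne hc.1.symm, fun hc => hbu hc.2⟩, ?_⟩)
      rw [proj_w hne, proj_coe]
      have : (⟨u, hne⟩ : {v : V // v ≠ w}) = a := Subtype.ext ha.symm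
      rwa [this]
    · have hau : (↑a : V) ≠ u := fun hc => hab (Subtype.ext (hc.trans hb.symm))
      refine Or.inr (Or.inr ⟨hb, ⟨h, fun hc => hau hc.1, fun hc => hne hc.2.symm⟩, ?_⟩)
      rw [proj_w hne, proj_coe]
      have : (⟨u, hne⟩ : {v : V // v ≠ w}) = b := Subtype.ext hb.symm
      rwa [this]

lemma lift_contract (hadj : G.Adj u w) {σ} (hσ : IsAO (Gdel G u w) σ)
    (hnp : NoPath σ u w) :
    liftO G u w hadj.ne (contractO σ u w) = σ := by
  have hne := hadj.ne
  have h2path : ∀ {x y z : V}, σ x y → σ y z → TransGen σ x z :=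
    fun h1 h2 => (TransGen.single h1).tail h2
  funext a b
  apply propext
  constructor
  · rintro ⟨hd, hc⟩
    by_cases ha : a = w
    · have hb : b ≠ w := fun hb => (Gdel G u w).irrefl (v := w) (by rw [ha, hb] at hd; exact hd)
      have hbu : b ≠ u := fun hb => hd.2.2 ⟨ha, hb⟩
      rw [ha, proj_w hne, proj_of_ne hne hb] at hc
      have hd' : (Gdel G u w).Adj w b := ha ▸ hd
      rcases hc with hs | ⟨_, hs⟩ | ⟨hbu', _⟩
      · rcases hσ.or hd' with h' | h'
        · rwa [ha]
        · exact absurd (h2path hs h') hnp.1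
      · rwa [ha]
      · exact absurd hbu' hbu
    · by_cases hb : b = w
      · have hau : a ≠ u := fun ha' => hd.2.1 ⟨ha', hb⟩
        rw [hb, proj_w hne, proj_of_ne hne ha] at hc
        have hd' : (Gdel G u w).Adj a w := hb ▸ hd
        rcases hc with hs | ⟨hau', _⟩ | ⟨_, hs⟩
        · rcases hσ.or hd' with h' | h'
          · rwa [hb]
          · exact absurd (h2path h' hs) hnp.2
        · exact absurd hau' hau
        · rwa [hb]
      · rw [proj_of_ne hne ha, proj_of_ne hne hb] at hc
        rcases hc with hs | ⟨hau, hs⟩ | ⟨hbu, hs⟩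
        · exact hs
        · rcases hσ.or hd with h' | h'
          · exact h'
          · exact absurd (rtg_ne ((ReflTransGen.single hs).tail (hau ▸ h')) (Ne.symm hne))
              hnp.2
        · rcases hσ.or hd with h' | h'
          · exact h'
          · exact absurd (h2path (hbu ▸ h') hs) hnp.1
  · intro hs
    have hd : (Gdel G u w).Adj a b := hσ.1 a b hs
    refine ⟨hd, ?_⟩
    by_cases ha : a = w
    · have hb : b ≠ w := fun hb => (Gdel G u w).irrefl (v := w) (by rw [ha, hb] at hd; exact hd)
      rw [ha, proj_w hne, proj_of_ne hne hb]
      exact Or.inr (Or.inl ⟨rfl, ha ▸ hs⟩)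
    · by_cases hb : b = w
      · rw [hb, proj_w hne, proj_of_ne hne ha]
        exact Or.inr (Or.inr ⟨rfl, hb ▸ hs⟩)
      · rw [proj_of_ne hne ha, proj_of_ne hne hb]
        exact Or.inl hs

def Rep (u w : V) (x : {v : V // v ≠ w}) (x' : V) : Prop :=
  x' = ↑x ∨ (↑x = u ∧ x' = w)

lemma contract_step {σ : V → V → Prop} {b y : {v : V // v ≠ w}}
    (h : contractO σ u w b y) :
    ∃ b' y', Rep u w b b' ∧ Rep u w y y' ∧ σ b' y' := by
  rcases h with hs | ⟨hb, hs⟩ | ⟨hy, hs⟩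
  · exact ⟨↑b, ↑y, Or.inl rfl, Or.inl rfl, hs⟩
  · exact ⟨w, ↑y, Or.inr ⟨hb, rfl⟩, Or.inl rfl, hs⟩
  · exact ⟨↑b, w, Or.inl rfl, Or.inr ⟨hy, rfl⟩, hs⟩

lemma rep_cases {b : {v : V // v ≠ w}} {b1 b2 : V}
    (h1 : Rep u w b b1) (h2 : Rep u w b b2) :
    b1 = b2 ∨ (b1 = u ∧ b2 = w) ∨ (b1 = w ∧ b2 = u) := by
  rcases h1 with rfl | ⟨hbu, rfl⟩
  · rcases h2 with rfl | ⟨hbu, rfl⟩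
    · exact Or.inl rfl
    · exact Or.inr (Or.inl ⟨hbu, rfl⟩)
  · rcases h2 with rfl | ⟨hbu2, rfl⟩
    · exact Or.inr (Or.inr ⟨rfl, hbu⟩)
    · exact Or.inl rfl

lemma contract_path {σ : V → V → Prop} (hne : u ≠ w)
    (hacyc : ∀ v, ¬ TransGen σ v v) (hnp : NoPath σ u w)
    {x y : {v : V // v ≠ w}} (h : TransGen (contractO σ u w) x y) :
    (∃ x' y', Rep u w x x' ∧ Rep u w y y' ∧ TransGen σ x' y') ∨
    (∃ x' y', Rep u w x x' ∧ Rep u w y y' ∧ TransGen σ x' u ∧ ReflTransGen σ w y') ∨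
    (∃ x' y', Rep u w x x' ∧ Rep u w y y' ∧ TransGen σ x' w ∧ ReflTransGen σ u y') := by
  induction h with
  | single hstep =>
    obtain ⟨b', y', hb, hy, hs⟩ := contract_step hstep
    exact Or.inl ⟨b', y', hb, hy, TransGen.single hs⟩
  | tail hxb hstep ih =>
    obtain ⟨b2, y', hb2, hy, hs⟩ := contract_step hstep
    rcases ih with ⟨x', b1, hx, hb1, hA⟩ | ⟨x', b1, hx, hb1, hB1, hB2⟩ |
      ⟨x', b1, hx, hb1, hC1, hC2⟩
    · rcases rep_cases hb1 hb2 with heq | ⟨h1u, h2w⟩ | ⟨h1w, h2u⟩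
      · exact Or.inl ⟨x', y', hx, hy, hA.tail (heq ▸ hs)⟩
      · refine Or.inr (Or.inl ⟨x', y', hx, hy, h1u ▸ hA, ?_⟩)
        exact ReflTransGen.single (h2w ▸ hs)
      · refine Or.inr (Or.inr ⟨x', y', hx, hy, h1w ▸ hA, ?_⟩)
        exact ReflTransGen.single (h2u ▸ hs)
    · rcases rep_cases hb1 hb2 with heq | ⟨h1u, h2w⟩ | ⟨h1w, h2u⟩
      · exact Or.inr (Or.inl ⟨x', y', hx, hy, hB1, hB2.tail (heq ▸ hs)⟩)
      · exact absurd (rtg_ne (h1u ▸ hB2) (Ne.symm hne)) hnp.2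
      · exact Or.inl ⟨x', y', hx, hy, hB1.tail (h2u ▸ hs)⟩
    · rcases rep_cases hb1 hb2 with heq | ⟨h1u, h2w⟩ | ⟨h1w, h2u⟩
      · exact Or.inr (Or.inr ⟨x', y', hx, hy, hC1, hC2.tail (heq ▸ hs)⟩)
      · exact Or.inl ⟨x', y', hx, hy, hC1.tail (h2w ▸ hs)⟩
      · exact absurd (rtg_ne (h1w ▸ hC2) hne) hnp.1

lemma contract_isAO (hadj : G.Adj u w) {σ : V → V → Prop}
    (hσ : IsAO (Gdel G u w) σ) (hnp : NoPath σ u w) :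
    IsAO (Gcon G u w) (contractO σ u w) := by
  have hne := hadj.ne
  have hGadj : ∀ {x y : V}, σ x y → G.Adj x y := fun hs => (hσ.1 _ _ hs).1
  refine ⟨?_, ?_, ?_⟩
  · rintro a b (hs | ⟨ha, hs⟩ | ⟨hb, hs⟩)
    · exact ⟨fun hc => (hGadj hs).ne (congrArg Subtype.val hc), Or.inl (hGadj hs)⟩
    · refine ⟨fun hc => ?_, Or.inr (Or.inl ⟨ha, hGadj hs⟩)⟩
      rw [hc] at ha
      rw [ha] at hs
      exact hnp.2 (TransGen.single hs)
    · refine ⟨fun hc => ?_, Or.inr (Or.inr ⟨hb, hGadj hs⟩)⟩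
      rw [← hc] at hb
      rw [hb] at hs
      exact hnp.1 (TransGen.single hs)
  · intro a b hab
    constructor
    · rintro (hs | ⟨ha, hs⟩ | ⟨hb, hs⟩) (hs' | ⟨hb', hs'⟩ | ⟨ha', hs'⟩)
      · exact (hσ.2.1 _ _ (hσ.1 _ _ hs)).mp hs hs'
      · exact hnp.2 ((TransGen.single hs').tail (hb' ▸ hs))
      · exact hnp.1 ((TransGen.single (ha' ▸ hs)).tail hs')
      · exact hnp.2 ((TransGen.single hs).tail (ha ▸ hs'))
      · exact hnp.2 (TransGen.single (hb' ▸ hs))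
      · exact (hσ.2.1 _ _ (hσ.1 _ _ hs)).mp hs hs'
      · exact hnp.1 ((TransGen.single (hb ▸ hs')).tail hs)
      · exact (hσ.2.1 _ _ (hσ.1 _ _ hs)).mp hs hs'
      · exact hab.1 (Subtype.ext (ha'.trans hb.symm))
    · intro hn
      rcases hab.2 with hG | ⟨ha, hG⟩ | ⟨hb, hG⟩
      · have hd : (Gdel G u w).Adj ↑a ↑b :=
          ⟨hG, fun hc => b.2 hc.2, fun hc => a.2 hc.1⟩
        rcases hσ.or hd with hs | hs
        · exact Or.inl hs
        · exact absurd (Or.inl hs) hn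
      · have hbu : (↑b : V) ≠ u := fun hc => hab.1 (Subtype.ext (ha.trans hc.symm))
        have hd : (Gdel G u w).Adj w ↑b :=
          ⟨hG, fun hc => hne hc.1.symm, fun hc => hbu hc.2⟩
        rcases hσ.or hd with hs | hs
        · exact Or.inr (Or.inl ⟨ha, hs⟩)
        · exact absurd (Or.inr (Or.inr ⟨ha, hs⟩)) hn
      · have hau : (↑a : V) ≠ u := fun hc => hab.1 (Subtype.ext (hc.trans hb.symm))
        have hd : (Gdel G u w).Adj ↑a w :=
          ⟨hG, fun hc => hau hc.1, fun hc => hne hc.2.symm⟩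
        rcases hσ.or hd with hs | hs
        · exact Or.inr (Or.inr ⟨hb, hs⟩)
        · exact absurd (Or.inr (Or.inl ⟨hb, hs⟩)) hn
  · intro v hv
    rcases contract_path hne hσ.2.2 hnp hv with ⟨x', y', hx, hy, hT⟩ |
      ⟨x', y', hx, hy, hT, hR⟩ | ⟨x', y', hx, hy, hT, hR⟩
    · rcases rep_cases hx hy with heq | ⟨h1u, h2w⟩ | ⟨h1w, h2u⟩
      · exact hσ.2.2 x' (heq ▸ hT)
      · exact hnp.1 (h1u ▸ h2w ▸ hT)
      · exact hnp.2 (h1w ▸ h2u ▸ hT)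
    · rcases hx with rfl | ⟨hvu, rfl⟩
      · rcases hy with rfl | ⟨hvu, rfl⟩
        · exact hnp.2 (Relation.TransGen.trans_right hR hT)
        · rw [hvu] at hT
          exact hσ.2.2 u hT
      · exact hnp.2 hT
    · rcases hx with rfl | ⟨hvu, rfl⟩
      · rcases hy with rfl | ⟨hvu, rfl⟩
        · exact hnp.1 (Relation.TransGen.trans_right hR hT)
        · rw [hvu] at hT
          exact hnp.1 hT
      · exact hσ.2.2 _ hT

end Orient

section Bij

variable {G : SimpleGraph V} {u w : V}

lemma gdel_hH (G : SimpleGraph V) (u w : V) : ∀ a b : V,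
    (Gdel G u w).Adj a b ↔ (G.Adj a b ∧ ¬(a = u ∧ b = w) ∧ ¬(a = w ∧ b = u)) :=
  fun _ _ => Iff.rfl

lemma gdel_hH' (G : SimpleGraph V) (u w : V) : ∀ a b : V,
    (Gdel G u w).Adj a b ↔ (G.Adj a b ∧ ¬(a = w ∧ b = u) ∧ ¬(a = u ∧ b = w)) := by
  intro a b
  rw [gdel_adj]
  tauto

lemma gdel_not_adj_uw (G : SimpleGraph V) (u w : V) : ¬ (Gdel G u w).Adj u w :=
  fun h => h.2.1 ⟨rfl, rfl⟩

lemma gdel_not_adj_wu (G : SimpleGraph V) (u w : V) : ¬ (Gdel G u w).Adj w u :=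
  fun h => h.2.2 ⟨rfl, rfl⟩

open scoped Classical in
noncomputable def FAO (G : SimpleGraph V) (u w : V) (hadj : G.Adj u w) :
    {σ : V → V → Prop // IsAO (Gdel G u w) σ} ⊕
      {τ : {v : V // v ≠ w} → {v : V // v ≠ w} → Prop // IsAO (Gcon G u w) τ} →
    {r : V → V → Prop // IsAO G r} := fun x =>
  match x with
  | Sum.inl ⟨σ, hσ⟩ =>
    if hp : TransGen σ w u then
      ⟨fwdO σ w u, fwd_isAO hadj.symm (gdel_hH' G u w) hσ (fun hq => hσ.2.2 w (hp.trans hq))⟩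
    else ⟨fwdO σ u w, fwd_isAO hadj (gdel_hH G u w) hσ hp⟩
  | Sum.inr ⟨τ, hτ⟩ =>
    ⟨fwdO (liftO G u w hadj.ne τ) w u,
      fwd_isAO hadj.symm (gdel_hH' G u w) (lift_isAO hadj hτ).1 (lift_isAO hadj hτ).2.1⟩

lemma FAO_restrict (hadj : G.Adj u w) (x) :
    restrictO (Gdel G u w) (FAO G u w hadj x).1 =
      (match x with
        | Sum.inl s => s.1
        | Sum.inr t => liftO G u w hadj.ne t.1) := by
  classical
  rcases x with ⟨σ, hσ⟩ | ⟨τ, hτ⟩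
  · simp only [FAO]
    split
    · exact restrict_fwd (gdel_not_adj_wu G u w) hσ.1
    · exact restrict_fwd (gdel_not_adj_uw G u w) hσ.1
  · exact restrict_fwd (gdel_not_adj_wu G u w) (lift_isAO hadj hτ).1.1

lemma count_AO [Finite V] (G : SimpleGraph V) (hadj : G.Adj u w) :
    Nat.card {r : V → V → Prop // IsAO G r} =
      Nat.card {σ : V → V → Prop // IsAO (Gdel G u w) σ} +
      Nat.card {τ : {v : V // v ≠ w} → {v : V // v ≠ w} → Prop // IsAO (Gcon G u w) τ} := by
  classical
  rw [← Nat.card_sum]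
  refine (Nat.card_eq_of_bijective (FAO G u w hadj) ⟨?_, ?_⟩).symm
  · intro x y heq
    have hres := congrArg (restrictO (Gdel G u w)) (congrArg Subtype.val heq)
    rw [FAO_restrict hadj, FAO_restrict hadj] at hres
    rcases x with ⟨σ, hσ⟩ | ⟨τ, hτ⟩ <;> rcases y with ⟨σ', hσ'⟩ | ⟨τ', hτ'⟩
    · simp only at hres
      subst hres
      rfl
    · exfalso
      simp only at hres
      subst hres
      have hval := congrArg Subtype.val heq
      simp only [FAO] at hval
      split at hval
      · next hp => exact (lift_isAO hadj hτ').2.2 hp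
      · have h2 : fwdO (liftO G u w hadj.ne τ') w u u w := by
          rw [← hval]
          exact Or.inr ⟨rfl, rfl⟩
        rcases h2 with hs | ⟨h3, _⟩
        · exact gdel_not_adj_uw G u w hs.1
        · exact hadj.ne h3
    · exfalso
      simp only at hres
      have hres := hres.symm
      subst hres
      have hval := congrArg Subtype.val heq
      simp only [FAO] at hval
      split at hval
      · next hp => exact (lift_isAO hadj hτ).2.2 hp
      · have h2 : fwdO (liftO G u w hadj.ne τ) w u u w := by
          rw [hval]
          exact Or.inr ⟨rfl, rfl⟩
        rcases h2 with hs | ⟨h3, _⟩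
        · exact gdel_not_adj_uw G u w hs.1
        · exact hadj.ne h3
    · simp only at hres
      have : τ = τ' := by
        rw [← contract_lift hadj hτ, ← contract_lift hadj hτ', hres]
      subst this
      rfl
  · rintro ⟨r, hr⟩
    have hσ : IsAO (Gdel G u w) (restrictO (Gdel G u w) r) :=
      restrict_isAO (H := Gdel G u w) (fun a b h => h.1) hr
    rcases hr.or hadj with huw | hwu
    · have hval : r = fwdO (restrictO (Gdel G u w) r) u w :=
        eq_fwd_of hr hadj huw (gdel_hH G u w)
      have hp : ¬ TransGen (restrictO (Gdel G u w) r) w u :=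
        no_path_of_fwd_acyclic (hval ▸ hr)
      refine ⟨Sum.inl ⟨restrictO (Gdel G u w) r, hσ⟩, ?_⟩
      simp only [FAO]
      rw [dif_neg hp]
      exact Subtype.ext hval.symm
    · have hval : r = fwdO (restrictO (Gdel G u w) r) w u :=
        eq_fwd_of hr hadj.symm hwu (gdel_hH' G u w)
      have hnuw : ¬ TransGen (restrictO (Gdel G u w) r) u w :=
        no_path_of_fwd_acyclic (hval ▸ hr)
      by_cases hp : TransGen (restrictO (Gdel G u w) r) w u
      · refine ⟨Sum.inl ⟨restrictO (Gdel G u w) r, hσ⟩, ?_⟩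
        simp only [FAO]
        rw [dif_pos hp]
        exact Subtype.ext hval.symm
      · refine ⟨Sum.inr ⟨contractO (restrictO (Gdel G u w) r) u w,
          contract_isAO hadj hσ ⟨hnuw, hp⟩⟩, ?_⟩
        refine Subtype.ext ?_
        show fwdO (liftO G u w hadj.ne (contractO (restrictO (Gdel G u w) r) u w)) w u = r
        rw [lift_contract hadj hσ ⟨hnuw, hp⟩]
        exact hval.symm

end Bij

section Measure

variable {G : SimpleGraph V} {u w : V}

/-- number of ordered adjacent pairs -/
noncomputable def nE (G : SimpleGraph V) : ℕ :=
  Nat.card {p : V × V // G.Adj p.1 p.2}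

lemma nE_del [Finite V] (hadj : G.Adj u w) : nE (Gdel G u w) + 2 ≤ nE G := by
  classical
  have hinj : Function.Injective
      (fun x : {p : V × V // (Gdel G u w).Adj p.1 p.2} ⊕ Bool =>
        (match x with
          | Sum.inl p => ⟨p.1, p.2.1⟩
          | Sum.inr true => ⟨(u, w), hadj⟩
          | Sum.inr false => ⟨(w, u), hadj.symm⟩ : {p : V × V // G.Adj p.1 p.2})) := by
    rintro x y heq
    rcases x with ⟨⟨a, b⟩, hab⟩ | bb <;> rcases y with ⟨⟨c, d⟩, hcd⟩ | bb'
    · simp only [Subtype.mk.injEq, Prod.mk.injEq] at heq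
      obtain ⟨rfl, rfl⟩ := heq
      rfl
    · rcases bb' with _ | _
      · simp only [Subtype.mk.injEq, Prod.mk.injEq] at heq
        exact absurd ⟨heq.1, heq.2⟩ hab.2.2
      · simp only [Subtype.mk.injEq, Prod.mk.injEq] at heq
        exact absurd ⟨heq.1, heq.2⟩ hab.2.1
    · rcases bb with _ | _
      · simp only [Subtype.mk.injEq, Prod.mk.injEq] at heq
        exact absurd ⟨heq.1.symm, heq.2.symm⟩ hcd.2.2
      · simp only [Subtype.mk.injEq, Prod.mk.injEq] at heq
        exact absurd ⟨heq.1.symm, heq.2.symm⟩ hcd.2.1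
    · rcases bb with _ | _ <;> rcases bb' with _ | _
      · rfl
      · simp only [Subtype.mk.injEq, Prod.mk.injEq] at heq
        exact absurd heq.1.symm hadj.ne
      · simp only [Subtype.mk.injEq, Prod.mk.injEq] at heq
        exact absurd heq.1 hadj.ne
      · rfl
  have := Nat.card_le_card_of_injective _ hinj
  rwa [Nat.card_sum, Nat.card_eq_fintype_card (α := Bool)] at this

lemma nE_con_le [Finite V] (hadj : G.Adj u w) : nE (Gcon G u w) ≤ nE (Gdel G u w) := by
  classical
  have hne := hadj.ne
  apply Nat.card_le_card_of_surjective
    (f := fun p : {p : V × V // (Gdel G u w).Adj p.1 p.2} =>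
      (⟨(proj u w hne p.1.1, proj u w hne p.1.2), adj_proj hadj p.2⟩ :
        {q : {v : V // v ≠ w} × {v : V // v ≠ w} // (Gcon G u w).Adj q.1 q.2}))
  rintro ⟨⟨x, y⟩, hxy⟩
  rcases hxy.2 with h | ⟨h1, h2⟩ | ⟨h1, h2⟩
  · refine ⟨⟨(↑x, ↑y), ⟨h, fun hc => y.2 hc.2, fun hc => x.2 hc.1⟩⟩, ?_⟩
    apply Subtype.ext
    simp only [Prod.mk.injEq]
    exact ⟨proj_coe hne x, proj_coe hne y⟩
  · have hyu : (↑y : V) ≠ u := fun hc => hxy.1 (Subtype.ext (h1.trans hc.symm))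
    refine ⟨⟨(w, ↑y), ⟨h2, fun hc => hne hc.1.symm, fun hc => hyu hc.2⟩⟩, ?_⟩
    apply Subtype.ext
    simp only [Prod.mk.injEq]
    refine ⟨?_, proj_coe hne y⟩
    rw [proj_w hne]
    exact Subtype.ext h1.symm
  · have hxu : (↑x : V) ≠ u := fun hc => hxy.1 (Subtype.ext (hc.trans h1.symm))
    refine ⟨⟨(↑x, w), ⟨h2, fun hc => hxu hc.1, fun hc => hne hc.2.symm⟩⟩, ?_⟩
    apply Subtype.ext
    simp only [Prod.mk.injEq]
    refine ⟨proj_coe hne x, ?_⟩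
    rw [proj_w hne]
    exact Subtype.ext h1.symm

end Measure

section Base

lemma AO_edgeless {V : Type*} [Fintype V] {G : SimpleGraph V} (h : ∀ a b, ¬ G.Adj a b) :
    ∃ P : Polynomial ℤ, IsChromaticPoly G P ∧
      ((Nat.card {r : V → V → Prop // IsAO G r} : ℤ) =
        (-1) ^ (Fintype.card V) * P.eval (-1)) := by
  refine ⟨Polynomial.X ^ (Fintype.card V), ?_, ?_⟩
  · intro k
    have e : {f : V → Fin k // ∀ u v, G.Adj u v → f u ≠ f v} ≃ (V → Fin k) :=
      Equiv.subtypeUnivEquiv (fun f a b hab => absurd hab (h a b))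
    rw [properColoringCount, Nat.card_congr e, Nat.card_fun, Nat.card_eq_fintype_card,
      Nat.card_eq_fintype_card, Fintype.card_fin]
    push_cast
    simp
  · have e : {r : V → V → Prop // IsAO G r} ≃ Unit := by
      refine ⟨fun _ => Unit.unit, fun _ => ⟨fun _ _ => False, ?_, ?_, ?_⟩, ?_, fun _ => rfl⟩
      · exact fun a b hf => hf.elim
      · exact fun a b hab => absurd hab (h a b)
      · intro v hv
        cases hv with
        | single h => exact h.elim
        | tail _ h => exact h.elim
      · intro r
        refine Subtype.ext (funext fun a => funext fun b => propext ?_)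
        exact ⟨False.elim, fun hr => absurd (r.2.1 a b hr) (h a b)⟩
    rw [Nat.card_congr e]
    simp [eval_pow, ← mul_pow]

end Base

lemma chromPoly_unique {V : Type*} {G : SimpleGraph V} {P Q : Polynomial ℤ}
    (hP : IsChromaticPoly G P) (hQ : IsChromaticPoly G Q) : P = Q := by
  apply Polynomial.eq_of_infinite_eval_eq
  apply Set.infinite_of_injective_forall_mem (f := (Nat.cast : ℕ → ℤ))
  · exact fun a b hab => Nat.cast_injective hab
  · intro k
    simp only [Set.mem_setOf_eq, hP k, hQ k]

universe u

lemma key (m : ℕ) : ∀ (V : Type u) [Fintype V] (G : SimpleGraph V), nE G ≤ m →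
    ∃ P : Polynomial ℤ, IsChromaticPoly G P ∧
      ((Nat.card {r : V → V → Prop // IsAO G r} : ℤ) =
        (-1) ^ (Fintype.card V) * P.eval (-1)) := by
  induction m with
  | zero =>
    intro V _ G h
    apply AO_edgeless
    intro a b hab
    have : Nonempty {p : V × V // G.Adj p.1 p.2} := ⟨⟨(a, b), hab⟩⟩
    have hpos : 0 < nE G := Nat.card_pos
    omega
  | succ m ih =>
    intro V _ G h
    by_cases hE : ∃ a b, G.Adj a b
    · classical
      obtain ⟨u, w, hadj⟩ := hE
      have hd := nE_del hadj
      have hc := nE_con_le hadj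
      obtain ⟨Pd, hPd, hAd⟩ := ih V (Gdel G u w) (by omega)
      obtain ⟨Pc, hPc, hAc⟩ := ih {v : V // v ≠ w} (Gcon G u w) (by omega)
      refine ⟨Pd - Pc, ?_, ?_⟩
      · intro k
        have hcol := count_del G hadj k
        have hcolz : (properColoringCount (Gdel G u w) k : ℤ) =
            (properColoringCount G k : ℤ) + (properColoringCount (Gcon G u w) k : ℤ) := by
          exact_mod_cast congrArg (Nat.cast : ℕ → ℤ) hcol
        rw [eval_sub, hPd k, hPc k]
        linarith
      · have hAO := count_AO G hadj
        have hn : 1 ≤ Fintype.card V := Fintype.card_pos_iff.mpr ⟨w⟩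
        obtain ⟨n', hn'⟩ : ∃ n', Fintype.card V = n' + 1 :=
          ⟨Fintype.card V - 1, by omega⟩
        have hcard : Fintype.card {v : V // v ≠ w} = n' := by
          have h1 : Fintype.card {v : V // v = w} = 1 := Fintype.card_subtype_eq w
          have h2 := Fintype.card_subtype_compl (fun v : V => v = w)
          rw [h1, hn'] at h2
          exact h2.trans (by omega)
        rw [hcard] at hAc
        rw [hAO, hn']
        push_cast
        rw [hAd, hAc, hn', eval_sub]
        ring
    · push_neg at hE
      exact AO_edgeless hE

section Region

variable {V : Type*} {G : SimpleGraph V}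

def sgn (G : SimpleGraph V) (z : V → ℝ) : V → V → Prop :=
  fun a b => G.Adj a b ∧ z a < z b

lemma sgn_isAO {z : V → ℝ} (hz : z ∈ graphicalComplement G) : IsAO G (sgn G z) := by
  refine ⟨fun a b h => h.1, ?_, ?_⟩
  · intro a b hab
    constructor
    · rintro ⟨_, hlt⟩ ⟨_, hlt'⟩
      exact lt_asymm hlt hlt'
    · intro hn
      refine ⟨hab, ?_⟩
      rcases lt_or_gt_of_ne (hz a b hab) with h | h
      · exact h
      · exact absurd ⟨hab.symm, h⟩ hn
  · intro v hv
    have h2 : TransGen (fun a b : V => z a < z b) v v :=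
      TransGen.mono (fun a b hab => hab.2) _ _ hv
    have h3 := Relation.transGen_eq_self (r := fun a b : V => z a < z b)
    rw [h3] at h2
    exact lt_irrefl _ h2

lemma sgn_const_on_comp {x y : V → ℝ} (hx : x ∈ graphicalComplement G)
    (hy : y ∈ connectedComponentIn (graphicalComplement G) x) : sgn G y = sgn G x := by
  funext a b
  apply propext
  by_cases hab : G.Adj a b
  · have hopen1 : IsOpen {z : V → ℝ | z a < z b} :=
      isOpen_lt (f := fun z : V → ℝ => z a) (g := fun z : V → ℝ => z b)
        (continuous_apply a) (continuous_apply b)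
    have hopen2 : IsOpen {z : V → ℝ | z b < z a} :=
      isOpen_lt (f := fun z : V → ℝ => z b) (g := fun z : V → ℝ => z a)
        (continuous_apply b) (continuous_apply a)
    have hdisj : Disjoint {z : V → ℝ | z a < z b} {z : V → ℝ | z b < z a} := by
      rw [Set.disjoint_left]
      intro z h1 h2
      simp only [Set.mem_setOf_eq] at h1 h2
      exact lt_asymm h1 h2
    have hsub : connectedComponentIn (graphicalComplement G) x ⊆
        {z : V → ℝ | z a < z b} ∪ {z : V → ℝ | z b < z a} := by
      intro z hzc
      have hzS := connectedComponentIn_subset (graphicalComplement G) x hzc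
      exact lt_or_gt_of_ne (hzS a b hab)
    have hxc := mem_connectedComponentIn hx
    rcases isPreconnected_connectedComponentIn.subset_or_subset hopen1 hopen2 hdisj hsub
      with hall | hall
    · exact ⟨fun _ => ⟨hab, hall hxc⟩, fun _ => ⟨hab, hall hy⟩⟩
    · constructor
      · rintro ⟨_, hlt⟩
        exact absurd (hall hy) (not_lt_of_gt hlt)
      · rintro ⟨_, hlt⟩
        exact absurd (hall hxc) (not_lt_of_gt hlt)
  · exact ⟨fun h => absurd h.1 hab, fun h => absurd h.1 hab⟩

lemma same_comp_of_sgn {x y : V → ℝ} (hx : x ∈ graphicalComplement G)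
    (hy : y ∈ graphicalComplement G) (hs : sgn G x = sgn G y) :
    connectedComponentIn (graphicalComplement G) x =
      connectedComponentIn (graphicalComplement G) y := by
  have hiff : ∀ p q, G.Adj p q → (x p < x q ↔ y p < y q) := by
    intro p q hpq
    have hpe : sgn G x p q = sgn G y p q := congrFun (congrFun hs p) q
    constructor
    · intro h
      exact (Eq.mp hpe ⟨hpq, h⟩).2
    · intro h
      exact (Eq.mp hpe.symm ⟨hpq, h⟩).2
  have hseg : segment ℝ x y ⊆ graphicalComplement G := by
    rintro z ⟨a, b, ha, hb, hab, rfl⟩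
    have key : ∀ p q : V, x p < x q → y p < y q →
        (a • x + b • y) p < (a • x + b • y) q := by
      intro p q h1 h2
      simp only [Pi.add_apply, Pi.smul_apply, smul_eq_mul]
      rcases eq_or_lt_of_le ha with ha0 | ha0
      · have hb1 : b = 1 := by linarith
        rw [← ha0, hb1]
        simpa using h2
      · exact add_lt_add_of_lt_of_le (mul_lt_mul_of_pos_left h1 ha0)
          (mul_le_mul_of_nonneg_left h2.le hb)
    intro p q hpq
    rcases lt_or_gt_of_ne (hx p q hpq) with h1 | h1
    · exact ne_of_lt (key p q h1 ((hiff p q hpq).mp h1))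
    · have h2 : y q < y p := (hiff q p hpq.symm).mp h1
      exact ne_of_gt (key q p h1 h2)
  have hyc : y ∈ connectedComponentIn (graphicalComplement G) x :=
    (convex_segment x y).isPreconnected.subset_connectedComponentIn
      (left_mem_segment ℝ x y) hseg (right_mem_segment ℝ x y)
  exact connectedComponentIn_eq hyc

lemma zvec [Fintype V] {r : V → V → Prop} (hr : IsAO G r) :
    ∃ z : V → ℝ, z ∈ graphicalComplement G ∧ sgn G z = r := by
  classical
  haveI hpo : IsPartialOrder V (ReflTransGen r) := by
    refine { refl := fun a => ReflTransGen.refl,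
             trans := fun a b c h1 h2 => ReflTransGen.trans h1 h2,
             antisymm := fun a b h1 h2 => ?_ }
    by_contra hne
    exact hr.2.2 a ((rtg_ne h1 hne).trans (rtg_ne h2 (Ne.symm hne)))
  obtain ⟨s, hs, hsub⟩ := extend_partialOrder (ReflTransGen r)
  haveI := hs
  set z : V → ℝ := fun v => ((Finset.univ.filter fun x => s x v ∧ x ≠ v).card : ℝ) with hz
  have key : ∀ a b, r a b → z a < z b := by
    intro a b hab
    have hne : a ≠ b := fun he => hr.2.2 a (TransGen.single (he ▸ hab))
    have hsab : s a b := hsub a b (ReflTransGen.single hab)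
    have hsubset : (Finset.univ.filter fun x => s x a ∧ x ≠ a) ⊆
        (Finset.univ.filter fun x => s x b ∧ x ≠ b) := by
      intro x hx
      simp only [Finset.mem_filter, Finset.mem_univ, true_and] at hx ⊢
      refine ⟨IsTrans.trans x a b hx.1 hsab, fun he => ?_⟩
      rw [he] at hx
      exact hne (antisymm hsab hx.1)
    have hmem : a ∈ (Finset.univ.filter fun x => s x b ∧ x ≠ b) := by
      simp only [Finset.mem_filter, Finset.mem_univ, true_and]
      exact ⟨hsab, hne⟩
    have hnmem : a ∉ (Finset.univ.filter fun x => s x a ∧ x ≠ a) := by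
      simp only [Finset.mem_filter, Finset.mem_univ, true_and]
      exact fun hc => hc.2 rfl
    have hlt : (Finset.univ.filter fun x => s x a ∧ x ≠ a).card <
        (Finset.univ.filter fun x => s x b ∧ x ≠ b).card := by
      apply Finset.card_lt_card
      exact ⟨hsubset, fun hc => hnmem (hc hmem)⟩
    simp only [hz]
    exact_mod_cast hlt
  have hzS : z ∈ graphicalComplement G := by
    intro p q hpq
    rcases hr.or hpq with h1 | h1
    · exact ne_of_lt (key p q h1)
    · exact ne_of_gt (key q p h1)
  refine ⟨z, hzS, ?_⟩
  funext a b
  apply propext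
  constructor
  · rintro ⟨hab, hlt⟩
    rcases hr.or hab with h1 | h1
    · exact h1
    · exact absurd (key b a h1) (not_lt_of_gt hlt)
  · intro hab
    exact ⟨hr.1 a b hab, key a b hab⟩

lemma region_card [Fintype V] (G : SimpleGraph V) :
    Nat.card {C : Set (V → ℝ) //
        ∃ x ∈ graphicalComplement G, C = connectedComponentIn (graphicalComplement G) x} =
      Nat.card {r : V → V → Prop // IsAO G r} := by
  classical
  symm
  choose z hzS hzr using fun r : {r : V → V → Prop // IsAO G r} => zvec r.2
  apply Nat.card_eq_of_bijective
    (f := fun r => (⟨connectedComponentIn (graphicalComplement G) (z r),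
      z r, hzS r, rfl⟩ : {C : Set (V → ℝ) //
        ∃ x ∈ graphicalComplement G, C = connectedComponentIn (graphicalComplement G) x}))
  constructor
  · intro r r' heq
    have hcomp := congrArg Subtype.val heq
    simp only at hcomp
    have hmem : z r' ∈ connectedComponentIn (graphicalComplement G) (z r) := by
      rw [hcomp]
      exact mem_connectedComponentIn (hzS r')
    have := sgn_const_on_comp (hzS r) hmem
    rw [hzr r', hzr r] at this
    exact Subtype.ext this.symm
  · rintro ⟨C, x, hxS, rfl⟩
    refine ⟨⟨sgn G x, sgn_isAO hxS⟩, ?_⟩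
    refine Subtype.ext ?_
    show connectedComponentIn _ (z ⟨sgn G x, sgn_isAO hxS⟩) = connectedComponentIn _ x
    apply same_comp_of_sgn (hzS _) hxS
    rw [hzr ⟨sgn G x, sgn_isAO hxS⟩]

end Region

end Zas


/-- Zaslavsky's theorem for graphical arrangements: the number of regions is
`(-1)^|V| χ_G(-1)`. -/
theorem card_regions_graphical {V : Type*} [Fintype V] (G : SimpleGraph V)
    (P : Polynomial ℤ) (hP : IsChromaticPoly G P) :
    (Nat.card {C : Set (V → ℝ) //
        ∃ x ∈ graphicalComplement G, C = connectedComponentIn (graphicalComplement G) x} : ℤ) =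
      (-1) ^ (Fintype.card V) * P.eval (-1) := by
  obtain ⟨P₀, hP₀, hA⟩ := Zas.key (Zas.nE G) V G le_rfl
  rw [Zas.region_card G, hA, Zas.chromPoly_unique hP hP₀]
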